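/- Suppose φ is a ν'-self-concordant barrier function for a convex body K ⊂ R^d with B(0,r) ⊆ K ⊆ B(0,R) for some R > r > 0, i.e., φ: Int(K) → R is convex, third-order differentiable with φ(x) → +∞ as x → ∂K, satisfies ∇³φ(x)[h,h,h] ≤ 2(∇²φ(x)[h,h])^{3/2}, and hᵀ∇φ(x) ≤ √(ν' hᵀ∇²φ(x)h) for all x ∈ Int(K), h ∈ R^d. Let g(x) = φ(x) + (α/2)xᵀx for some α > 0. Then g is ν-self-concordant with ν = 4ν' + 4αR². -/

import Mathlib

open scoped RealInnerProductSpace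
open Set

variable {E : Type*} [NormedAddCommGroup E] [InnerProductSpace ℝ E]

lemma aux_q_contDiff (α : ℝ) (n : WithTop ℕ∞) : ContDiff ℝ n (fun x : E => (α/2) * ⟪x, x⟫) :=
  contDiff_const.mul (contDiff_id.inner ℝ contDiff_id)

lemma aux_q_fderiv (α : ℝ) (x h : E) :
    fderiv ℝ (fun x : E => (α/2) * ⟪x, x⟫) x h = α * ⟪x, h⟫ := by
  have h1 : fderiv ℝ (fun x : E => (α/2) * ⟪x, x⟫) x
      = (α/2) • fderiv ℝ (fun x : E => ⟪x, x⟫) x :=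
    fderiv_const_mul (differentiableAt_fun_id.inner ℝ differentiableAt_fun_id) (α/2)
  have h2 : fderiv ℝ (fun x : E => ⟪x, x⟫) x h
      = ⟪x, fderiv ℝ (fun x : E => x) x h⟫ + ⟪fderiv ℝ (fun x : E => x) x h, x⟫ :=
    fderiv_inner_apply ℝ differentiableAt_fun_id differentiableAt_fun_id h
  rw [h1]; simp only [ContinuousLinearMap.smul_apply, smul_eq_mul]
  rw [h2]; simp [real_inner_comm]; ring

lemma aux_q_fderiv_eq (α : ℝ) :
    (fderiv ℝ (fun x : E => (α/2) * ⟪x, x⟫)) = fun x => (α • (innerSL ℝ (E := E))) x := by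
  funext x
  ext h
  rw [aux_q_fderiv]
  simp

lemma aux_q_second (α : ℝ) (x h k : E) :
    iteratedFDeriv ℝ 2 (fun x : E => (α/2) * ⟪x, x⟫) x ![h, k] = α * ⟪h, k⟫ := by
  rw [iteratedFDeriv_two_apply, aux_q_fderiv_eq]
  have : fderiv ℝ (fun x : E => (α • (innerSL ℝ (E := E))) x) x = α • (innerSL ℝ (E := E)) :=
    (α • (innerSL ℝ (E := E))).fderiv
  rw [this]
  simp
  exact Or.inl rfl

lemma aux_q_third (α : ℝ) (x : E) (m : Fin 3 → E) :
    iteratedFDeriv ℝ 3 (fun x : E => (α/2) * ⟪x, x⟫) x m = 0 := by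
  have hconst : (iteratedFDeriv ℝ 2 (fun x : E => (α/2) * ⟪x, x⟫))
      = fun _ => iteratedFDeriv ℝ 2 (fun x : E => (α/2) * ⟪x, x⟫) 0 := by
    funext z
    ext mv
    have hm : mv = ![mv 0, mv 1] := by
      funext i; fin_cases i <;> rfl
    rw [hm, aux_q_second, aux_q_second]
  have h3 : iteratedFDeriv ℝ 3 (fun x : E => (α/2) * ⟪x, x⟫) x m
      = (fderiv ℝ (iteratedFDeriv ℝ 2 (fun x : E => (α/2) * ⟪x, x⟫)) x (m 0)) (Fin.tail m) := rfl
  rw [h3, hconst]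
  simp

lemma aux_second_nonneg {U : Set E} (hU : IsOpen U) {φ : E → ℝ}
    (hconv : ConvexOn ℝ U φ) (hdiff : ContDiffOn ℝ 3 φ U)
    {x : E} (hx : x ∈ U) (h : E) : 0 ≤ iteratedFDeriv ℝ 2 φ x ![h, h] := by
  classical
  -- the line through x in direction h
  set c : ℝ → E := fun t => x + t • h with hc
  have hccont : Continuous c := by fun_prop
  have hopen : IsOpen (c ⁻¹' U) := hU.preimage hccont
  have h0mem : (0:ℝ) ∈ c ⁻¹' U := by simp [hc, hx]
  obtain ⟨ε, hε, hball⟩ := Metric.isOpen_iff.mp hopen 0 h0mem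
  have hIoo : Ioo (-ε) ε ⊆ c ⁻¹' U := by
    intro t ht
    apply hball
    rw [Real.ball_eq_Ioo]
    simpa using ht
  -- differentiability facts
  have hφat : ∀ t ∈ Ioo (-ε) ε, ContDiffAt ℝ 3 φ (c t) := fun t ht =>
    hdiff.contDiffAt (hU.mem_nhds (hIoo ht))
  have hcderiv : ∀ t : ℝ, HasDerivAt c h t := fun t => by
    simpa [hc] using (((hasDerivAt_id t).smul_const h).const_add x)
  have hψderiv : ∀ t ∈ Ioo (-ε) ε, HasDerivAt (φ ∘ c) (fderiv ℝ φ (c t) h) t := by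
    intro t ht
    have hd : DifferentiableAt ℝ φ (c t) := (hφat t ht).differentiableAt (by norm_num)
    exact hd.hasFDerivAt.comp_hasDerivAt t (hcderiv t)
  -- convexity of ψ on the interval
  have hψconv : ConvexOn ℝ (Ioo (-ε) ε) (φ ∘ c) := by
    have := hconv.comp_affineMap (AffineMap.lineMap x (x + h))
    have heq : (AffineMap.lineMap x (x + h) : ℝ →ᵃ[ℝ] E) = c := by
      funext t; simp [AffineMap.lineMap_apply, hc]; module
    rw [heq] at this
    exact this.subset hIoo (convex_Ioo _ _)
  have hmono : MonotoneOn (deriv (φ ∘ c)) (Ioo (-ε) ε) :=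
    hψconv.monotoneOn_deriv fun t ht => (hψderiv t ht).differentiableAt
  -- second derivative of ψ at 0
  have hW : HasDerivAt (fun t => fderiv ℝ φ (c t) h)
      (fderiv ℝ (fderiv ℝ φ) x h h) 0 := by
    have hf2 : ContDiffAt ℝ 2 (fderiv ℝ φ) x := by
      have := (hφat 0 (by constructor <;> linarith)).fderiv_right (m := 2) (by norm_num)
      simpa [hc] using this
    have hfd : HasFDerivAt (fderiv ℝ φ) (fderiv ℝ (fderiv ℝ φ) x) x :=
      (hf2.differentiableAt (by norm_num)).hasFDerivAt
    have happ : HasFDerivAt (fun L : E →L[ℝ] ℝ => L h)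
        (ContinuousLinearMap.apply ℝ ℝ h) (fderiv ℝ φ x) :=
      (ContinuousLinearMap.apply ℝ ℝ h).hasFDerivAt
    have hc0 : c 0 = x := by simp [hc]
    have hcomp := happ.comp x hfd
    rw [← hc0] at hcomp
    have := hcomp.comp_hasDerivAt 0 (hcderiv 0)
    rw [hc0] at this
    exact this
  have hderiveq : deriv (φ ∘ c) =ᶠ[nhds (0:ℝ)] fun t => fderiv ℝ φ (c t) h := by
    filter_upwards [isOpen_Ioo.mem_nhds (show (0:ℝ) ∈ Ioo (-ε) ε by constructor <;> linarith)]
      with t ht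
    exact (hψderiv t ht).deriv
  have hW2 : HasDerivAt (deriv (φ ∘ c)) (fderiv ℝ (fderiv ℝ φ) x h h) 0 :=
    hW.congr_of_eventuallyEq hderiveq
  -- derivative of monotone function is nonneg
  have key : 0 ≤ fderiv ℝ (fderiv ℝ φ) x h h := by
    have hW3 : HasDerivWithinAt (deriv (φ ∘ c)) (fderiv ℝ (fderiv ℝ φ) x h h) (Ioo 0 ε) 0 :=
      hW2.hasDerivWithinAt
    rw [hasDerivWithinAt_iff_tendsto_slope' (by simp)] at hW3
    haveI : (nhdsWithin (0:ℝ) (Ioo 0 ε)).NeBot := by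
      apply mem_closure_iff_nhdsWithin_neBot.mp
      rw [closure_Ioo (by linarith : (0:ℝ) ≠ ε)]
      exact ⟨le_rfl, by linarith⟩
    refine ge_of_tendsto hW3 ?_
    filter_upwards [self_mem_nhdsWithin] with t ht
    have h0 : (0:ℝ) ∈ Ioo (-ε) ε := by constructor <;> linarith
    have ht' : t ∈ Ioo (-ε) ε := ⟨by linarith [ht.1], ht.2⟩
    have := hmono h0 ht' ht.1.le
    rw [slope_def_field]
    have htpos : 0 < t := ht.1
    have : 0 ≤ deriv (φ ∘ c) t - deriv (φ ∘ c) 0 := by linarith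
    rw [div_nonneg_iff]
    left
    constructor
    · linarith
    · linarith
  rw [iteratedFDeriv_two_apply]
  simpa using key

lemma aux_q_convexOn {U : Set E} (hUconv : Convex ℝ U) {α : ℝ} (hα : 0 ≤ α) :
    ConvexOn ℝ U (fun x : E => (α/2) * ⟪x, x⟫) := by
  refine ⟨hUconv, fun x _ y _ a b ha hb hab => ?_⟩
  have h1 : ‖a • x + b • y‖ ≤ a * ‖x‖ + b * ‖y‖ := by
    refine (norm_add_le _ _).trans ?_
    rw [norm_smul, norm_smul, Real.norm_eq_abs, Real.norm_eq_abs,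
      abs_of_nonneg ha, abs_of_nonneg hb]
  have h2 : ⟪a • x + b • y, a • x + b • y⟫ = ‖a • x + b • y‖ ^ 2 := real_inner_self_eq_norm_sq _
  have h3 : ⟪x, x⟫ = ‖x‖ ^ 2 := real_inner_self_eq_norm_sq _
  have h4 : ⟪y, y⟫ = ‖y‖ ^ 2 := real_inner_self_eq_norm_sq _
  simp only [smul_eq_mul, h2, h3, h4]
  have h5 : ‖a • x + b • y‖ ^ 2 ≤ (a * ‖x‖ + b * ‖y‖) ^ 2 := by
    apply sq_le_sq' _ h1
    have := norm_nonneg (a • x + b • y)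
    nlinarith [norm_nonneg x, norm_nonneg y]
  have h6 : (a * ‖x‖ + b * ‖y‖) ^ 2 ≤ a * ‖x‖ ^ 2 + b * ‖y‖ ^ 2 := by
    nlinarith [sq_nonneg (‖x‖ - ‖y‖), mul_nonneg ha hb]
  have h7 := mul_le_mul_of_nonneg_left (h5.trans h6) (by linarith : (0:ℝ) ≤ α/2)
  linarith


theorem stmt4 (d : ℕ) (K : Set (EuclideanSpace ℝ (Fin d))) (r R : ℝ)
    (hr : 0 < r) (hrR : r < R)
    (hKconv : Convex ℝ K)
    (hrK : Metric.ball 0 r ⊆ K) (hKR : K ⊆ Metric.ball 0 R)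
    (ν' : ℝ) (φ : EuclideanSpace ℝ (Fin d) → ℝ)
    -- φ is a ν'-self-concordant barrier for K:
    (hφconv : ConvexOn ℝ (interior K) φ)
    (hφdiff : ContDiffOn ℝ 3 φ (interior K))
    (hφbdry : ∀ y ∈ frontier K, Filter.Tendsto φ (nhdsWithin y (interior K)) Filter.atTop)
    (hφsc : ∀ x ∈ interior K, ∀ h : EuclideanSpace ℝ (Fin d),
      iteratedFDeriv ℝ 3 φ x ![h, h, h] ≤ 2 * (iteratedFDeriv ℝ 2 φ x ![h, h]) ^ ((3 : ℝ) / 2))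
    (hφν : ∀ x ∈ interior K, ∀ h : EuclideanSpace ℝ (Fin d),
      fderiv ℝ φ x h ≤ Real.sqrt (ν' * iteratedFDeriv ℝ 2 φ x ![h, h]))
    (α : ℝ) (hα : 0 < α)
    (g : EuclideanSpace ℝ (Fin d) → ℝ)
    (hg : g = fun x => φ x + (α / 2) * ⟪x, x⟫) :
    -- g is a ν-self-concordant barrier for K with ν = 4ν' + 4αR²:
    ConvexOn ℝ (interior K) g ∧
    ContDiffOn ℝ 3 g (interior K) ∧
    (∀ y ∈ frontier K, Filter.Tendsto g (nhdsWithin y (interior K)) Filter.atTop) ∧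
    (∀ x ∈ interior K, ∀ h : EuclideanSpace ℝ (Fin d),
      iteratedFDeriv ℝ 3 g x ![h, h, h] ≤ 2 * (iteratedFDeriv ℝ 2 g x ![h, h]) ^ ((3 : ℝ) / 2)) ∧
    (∀ x ∈ interior K, ∀ h : EuclideanSpace ℝ (Fin d),
      fderiv ℝ g x h ≤ Real.sqrt ((4 * ν' + 4 * α * R ^ 2) * iteratedFDeriv ℝ 2 g x ![h, h])) := by

  subst hg
  set q : EuclideanSpace ℝ (Fin d) → ℝ := fun x => (α/2) * ⟪x, x⟫ with hqdef
  have hR : (0:ℝ) < R := hr.trans hrR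
  have h0U : (0:EuclideanSpace ℝ (Fin d)) ∈ interior K := (interior_maximal hrK Metric.isOpen_ball) (Metric.mem_ball_self hr)
  -- iterated derivative additivity on the open set
  have hiter : ∀ (n : ℕ), ((n : WithTop ℕ∞)) ≤ 3 → ∀ x ∈ interior K,
      iteratedFDeriv ℝ n (fun x => φ x + q x) x
        = iteratedFDeriv ℝ n φ x + iteratedFDeriv ℝ n q x := by
    intro n hn x hx
    calc iteratedFDeriv ℝ n (fun x => φ x + q x) x
        = iteratedFDerivWithin ℝ n (fun x => φ x + q x) (interior K) x :=
          (iteratedFDerivWithin_of_isOpen n isOpen_interior hx).symm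
      _ = iteratedFDerivWithin ℝ n φ (interior K) x
            + iteratedFDerivWithin ℝ n q (interior K) x :=
          iteratedFDerivWithin_add_apply' (hφdiff.of_le hn x hx)
            ((aux_q_contDiff α n).contDiffOn x hx) (isOpen_interior.uniqueDiffOn) hx
      _ = iteratedFDeriv ℝ n φ x + iteratedFDeriv ℝ n q x := by
          rw [iteratedFDerivWithin_of_isOpen n isOpen_interior hx,
            iteratedFDerivWithin_of_isOpen n isOpen_interior hx]
  have hsec : ∀ x ∈ interior K, ∀ h : EuclideanSpace ℝ (Fin d), iteratedFDeriv ℝ 2 (fun x => φ x + q x) x ![h, h]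
      = iteratedFDeriv ℝ 2 φ x ![h, h] + α * ‖h‖^2 := by
    intro x hx h
    have := hiter 2 (by norm_num) x hx
    rw [this]
    simp only [ContinuousMultilinearMap.add_apply]
    rw [aux_q_second, real_inner_self_eq_norm_sq]
  have hthird : ∀ x ∈ interior K, ∀ h : EuclideanSpace ℝ (Fin d), iteratedFDeriv ℝ 3 (fun x => φ x + q x) x ![h, h, h]
      = iteratedFDeriv ℝ 3 φ x ![h, h, h] := by
    intro x hx h
    rw [hiter 3 (by norm_num) x hx]
    simp only [ContinuousMultilinearMap.add_apply]
    rw [aux_q_third]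
    ring
  have hfderiv : ∀ x ∈ interior K, ∀ h : EuclideanSpace ℝ (Fin d), fderiv ℝ (fun x => φ x + q x) x h
      = fderiv ℝ φ x h + α * ⟪x, h⟫ := by
    intro x hx h
    have hφd : DifferentiableAt ℝ φ x :=
      (hφdiff.contDiffAt (isOpen_interior.mem_nhds hx)).differentiableAt (by norm_num)
    have hqd : DifferentiableAt ℝ q x :=
      ((aux_q_contDiff α 1).differentiable (by norm_num)).differentiableAt
    rw [fderiv_fun_add hφd hqd]
    simp only [ContinuousLinearMap.add_apply]
    rw [aux_q_fderiv]
  refine ⟨?_, ?_, ?_, ?_, ?_⟩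
  · exact hφconv.add (aux_q_convexOn hKconv.interior hα.le)
  · exact hφdiff.add ((aux_q_contDiff α 3).contDiffOn)
  · intro y hy
    refine Filter.Tendsto.atTop_add_zero_eventuallyLE (hφbdry y hy) ?_
    filter_upwards with z
    have h1 : (0:ℝ) ≤ ⟪z, z⟫ := real_inner_self_nonneg
    have h2 : (0:ℝ) ≤ α/2 := by positivity
    exact mul_nonneg h2 h1
  · intro x hx h
    rw [hthird x hx h, hsec x hx h]
    refine (hφsc x hx h).trans ?_
    have hQ := aux_second_nonneg isOpen_interior hφconv hφdiff hx h
    have h1 : iteratedFDeriv ℝ 2 φ x ![h, h] ≤ iteratedFDeriv ℝ 2 φ x ![h, h] + α * ‖h‖^2 := by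
      nlinarith [sq_nonneg ‖h‖]
    have := Real.rpow_le_rpow hQ h1 (by norm_num : (0:ℝ) ≤ 3/2)
    linarith
  · intro x hx h
    have hQ := aux_second_nonneg isOpen_interior hφconv hφdiff hx h
    set Q := iteratedFDeriv ℝ 2 φ x ![h, h] with hQdef
    by_cases hh : h = 0
    · subst hh
      rw [(fderiv ℝ (fun x => φ x + q x) x).map_zero]
      exact Real.sqrt_nonneg _
    rw [hfderiv x hx h, hsec x hx h]
    by_cases hν : 0 ≤ ν'
    · have hxR : ‖x‖ ≤ R := le_of_lt (mem_ball_zero_iff.mp (hKR (interior_subset hx)))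
      have hinner : α * ⟪x, h⟫ ≤ α * (R * ‖h‖) := by
        refine mul_le_mul_of_nonneg_left ?_ hα.le
        exact (real_inner_le_norm x h).trans (mul_le_mul_of_nonneg_right hxR (norm_nonneg h))
      have h1 : fderiv ℝ φ x h + α * ⟪x, h⟫ ≤ Real.sqrt (ν' * Q) + α * (R * ‖h‖) :=
        add_le_add (hφν x hx h) hinner
      refine h1.trans ?_
      apply Real.le_sqrt_of_sq_le
      have hs0 : 0 ≤ Real.sqrt (ν' * Q) := Real.sqrt_nonneg _
      have hs2 : Real.sqrt (ν' * Q) ^ 2 = ν' * Q := Real.sq_sqrt (mul_nonneg hν hQ)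
      nlinarith [sq_nonneg (Real.sqrt (ν' * Q) - α * (R * ‖h‖)),
        mul_nonneg (mul_nonneg hν hα.le) (sq_nonneg ‖h‖),
        mul_nonneg (mul_nonneg hα.le (sq_nonneg R)) hQ,
        mul_nonneg hν hQ, sq_nonneg ‖h‖, norm_nonneg h, sq_nonneg R]
    · exfalso
      push_neg at hν
      -- the gradient of φ vanishes on the interior
      have hzero : ∀ z ∈ interior K, fderiv ℝ φ z = 0 := by
        intro z hz
        have key : ∀ v : EuclideanSpace ℝ (Fin d), fderiv ℝ φ z v ≤ 0 := by
          intro v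
          refine (hφν z hz v).trans ?_
          have hle : ν' * iteratedFDeriv ℝ 2 φ z ![v, v] ≤ 0 :=
            mul_nonpos_of_nonpos_of_nonneg hν.le
              (aux_second_nonneg isOpen_interior hφconv hφdiff hz v)
          calc Real.sqrt (ν' * iteratedFDeriv ℝ 2 φ z ![v, v])
              ≤ Real.sqrt 0 := Real.sqrt_le_sqrt hle
            _ = 0 := Real.sqrt_zero
        ext v
        have h1 := key v
        have h2 := key (-v)
        rw [(fderiv ℝ φ z).map_neg v] at h2
        simp only [ContinuousLinearMap.zero_apply]
        linarith
      -- hence φ is constant on the interior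
      have hdiffOn : DifferentiableOn ℝ φ (interior K) := fun z hz =>
        (hφdiff z hz).differentiableWithinAt (by norm_num)
      have hconst : ∀ z ∈ interior K, φ z = φ 0 := by
        intro z hz
        exact hKconv.interior.is_const_of_fderivWithin_eq_zero hdiffOn
          (fun w hw => by rw [fderivWithin_of_isOpen isOpen_interior hw]; exact hzero w hw)
          hz h0U
      -- the frontier is nonempty
      haveI : Nontrivial (EuclideanSpace ℝ (Fin d)) := nontrivial_of_ne h 0 hh
      haveI : PreconnectedSpace (EuclideanSpace ℝ (Fin d)) := ⟨(convex_univ : Convex ℝ (univ : Set (EuclideanSpace ℝ (Fin d)))).isPreconnected⟩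
      have hKne : K ≠ univ := by
        intro heq
        have hmem : ((R+1)/‖h‖) • h ∈ Metric.ball (0:EuclideanSpace ℝ (Fin d)) R := hKR (by rw [heq]; exact mem_univ _)
        rw [mem_ball_zero_iff, norm_smul, Real.norm_eq_abs] at hmem
        have hn : (0:ℝ) < ‖h‖ := norm_pos_iff.mpr hh
        rw [abs_of_pos (by positivity)] at hmem
        rw [div_mul_cancel₀ _ (ne_of_gt hn)] at hmem
        linarith
      obtain ⟨y, hy⟩ := nonempty_frontier_iff.mpr
        ⟨⟨0, hrK (Metric.mem_ball_self hr)⟩, hKne⟩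
      -- y is in the closure of the interior
      have hyc : y ∈ closure (interior K) := by
        have hyK : y ∈ closure K := hy.1
        have ht : Filter.Tendsto (fun n : ℕ => (1/((n:ℝ)+1))) Filter.atTop (nhds 0) :=
          tendsto_one_div_add_atTop_nhds_zero_nat
        have htend : Filter.Tendsto
            (fun n : ℕ => (1/((n:ℝ)+1)) • (0:EuclideanSpace ℝ (Fin d)) + (1 - 1/((n:ℝ)+1)) • y)
            Filter.atTop (nhds y) := by
          have := (ht.smul_const (0:EuclideanSpace ℝ (Fin d))).add (((tendsto_const_nhds (x := (1:ℝ))).sub ht).smul_const y)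
          simpa using this
        refine mem_closure_of_tendsto htend ?_
        filter_upwards with n
        refine hKconv.combo_interior_closure_mem_interior h0U hyK (by positivity) ?_ (by ring)
        have : 1/((n:ℝ)+1) ≤ 1 := by
          rw [div_le_one (by positivity)]
          linarith [Nat.cast_nonneg (α := ℝ) n]
        linarith
      haveI : (nhdsWithin y (interior K)).NeBot := mem_closure_iff_nhdsWithin_neBot.mp hyc
      have htend := hφbdry y hy
      have h1 : ∀ᶠ z in nhdsWithin y (interior K), φ 0 + 1 ≤ φ z :=
        htend.eventually_ge_atTop _
      have h2 : ∀ᶠ z in nhdsWithin y (interior K), φ z = φ 0 := by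
        filter_upwards [self_mem_nhdsWithin] with z hz
        exact hconst z hz
      obtain ⟨z, hz1, hz2⟩ := (h1.and h2).exists
      rw [hz2] at hz1
      linarith
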